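/- For every complete binary tree T with n ≥ 2 leaves, the number of admissible labellings of T equals the number of permutations σ ∈ S_{n−1} whose decreasing tree DT(σ) has shape t, where t is the binary tree formed by the internal nodes of T. -/

import Mathlib

/-- (Incomplete) binary trees; `nil` is the empty tree. -/
inductive BT
  | nil : BT
  | nd : BT → BT → BT
deriving DecidableEq

/-- Number of nodes of a binary tree. -/
def BT.nodes : BT → ℕ
  | .nil => 0
  | .nd l r => l.nodes + r.nodes + 1

/-- The set of permutation words of {1, …, n}. -/
def permWords (n : ℕ) : Finset (List ℕ) := (List.range' 1 n).permutations.toFinset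

/-- Whether the word `w` is an admissible labelling of the complete binary tree whose internal
nodes form `t`: at each internal node, the smallest label below it lies in the left subtree and
the largest in the right subtree. -/
def admB : BT → List ℕ → Bool
  | .nil, _ => true
  | .nd l r, w =>
    admB l (w.take (l.nodes + 1)) && admB r (w.drop (l.nodes + 1))
      && decide ((w.take (l.nodes + 1)).minimum = w.minimum)
      && decide ((w.drop (l.nodes + 1)).maximum = w.maximum)

/-- Fuel-based helper computing the shape of the decreasing tree of a word: the root is the
largest letter, with left/right subtrees the decreasing trees of the factors to its left/right. -/
def dtShapeAux : ℕ → List ℕ → BT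
  | 0, _ => BT.nil
  | f + 1, w =>
    if w = [] then BT.nil
    else
      let i := w.idxOf (w.foldr max 0)
      BT.nd (dtShapeAux f (w.take i)) (dtShapeAux f (w.drop (i + 1)))

/-- The shape of the decreasing tree of a word with distinct letters. -/
def dtShape (w : List ℕ) : BT := dtShapeAux w.length w

/-! ### Auxiliary machinery -/

/-- Common recursive count. -/
def Fcnt : BT → ℕ
  | .nil => 1
  | .nd l r => Nat.choose (l.nodes + r.nodes) l.nodes * Fcnt l * Fcnt r

/-- Words that are permutations of the finset `S`. -/
def wordsOf (S : Finset ℕ) : Finset (List ℕ) := (S.sort (· ≤ ·)).permutations.toFinset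

lemma mem_wordsOf {S : Finset ℕ} {w : List ℕ} : w ∈ wordsOf S ↔ (↑w : Multiset ℕ) = S.val := by
  rw [wordsOf, List.mem_toFinset, List.mem_permutations, ← Multiset.coe_eq_coe, Finset.sort_eq]

lemma nodup_of_mem_wordsOf {S : Finset ℕ} {w : List ℕ} (h : w ∈ wordsOf S) : w.Nodup := by
  have := S.nodup
  rw [← mem_wordsOf.1 h, Multiset.coe_nodup] at this
  exact this

lemma length_of_mem_wordsOf {S : Finset ℕ} {w : List ℕ} (h : w ∈ wordsOf S) :
    w.length = S.card := by
  have := congrArg Multiset.card (mem_wordsOf.1 h)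
  rw [Finset.card, ← this, Multiset.coe_card]

lemma mem_iff_of_mem_wordsOf {S : Finset ℕ} {w : List ℕ} (h : w ∈ wordsOf S) {x : ℕ} :
    x ∈ w ↔ x ∈ S := by
  rw [← Finset.mem_val, ← mem_wordsOf.1 h, Multiset.mem_coe]

lemma toFinset_of_mem_wordsOf {S : Finset ℕ} {w : List ℕ} (h : w ∈ wordsOf S) :
    w.toFinset = S := by
  ext x
  rw [List.mem_toFinset]
  exact mem_iff_of_mem_wordsOf h

lemma toFinset_val_of_nodup {w : List ℕ} (h : w.Nodup) : w.toFinset.val = (↑w : Multiset ℕ) := by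
  simp [List.toFinset, Multiset.toFinset, List.dedup_eq_self.2 h]

lemma self_mem_wordsOf {w : List ℕ} (h : w.Nodup) : w ∈ wordsOf w.toFinset := by
  rw [mem_wordsOf, toFinset_val_of_nodup h]

lemma card_wordsOf (S : Finset ℕ) : (wordsOf S).card = S.card.factorial := by
  rw [wordsOf, List.toFinset_card_of_nodup (List.nodup_permutations _ (Finset.sort_nodup _ _)),
    List.length_permutations, Finset.length_sort]

/-! ### foldr max lemmas -/

lemma le_foldr_max {w : List ℕ} {x : ℕ} (h : x ∈ w) : x ≤ w.foldr max 0 := by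
  induction w with
  | nil => simp at h
  | cons a t ih =>
    simp only [List.foldr_cons]
    rcases List.mem_cons.1 h with rfl | h
    · exact le_max_left _ _
    · exact le_trans (ih h) (le_max_right _ _)

lemma foldr_max_le {w : List ℕ} {M : ℕ} (h : ∀ x ∈ w, x ≤ M) : w.foldr max 0 ≤ M := by
  induction w with
  | nil => simp
  | cons a t ih =>
    simp only [List.foldr_cons]
    exact max_le (h a (by simp)) (ih fun x hx => h x (by simp [hx]))

lemma foldr_max_eq {w : List ℕ} {M : ℕ} (hM : M ∈ w) (h : ∀ x ∈ w, x ≤ M) :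
    w.foldr max 0 = M :=
  le_antisymm (foldr_max_le h) (le_foldr_max hM)

lemma foldr_max_mem {w : List ℕ} (h : w ≠ []) : w.foldr max 0 ∈ w := by
  induction w with
  | nil => simp at h
  | cons a t ih =>
    simp only [List.foldr_cons]
    rcases eq_or_ne t [] with rfl | ht
    · simp
    · rcases le_total (t.foldr max 0) a with hle | hle
      · simp [max_eq_left hle]
      · simp [max_eq_right hle, ih ht]

/-! ### dtShape lemmas -/

lemma dtShapeAux_congr : ∀ f g (w : List ℕ), w.length ≤ f → w.length ≤ g →
    dtShapeAux f w = dtShapeAux g w := by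
  intro f
  induction f with
  | zero =>
    intro g w hf _
    obtain rfl : w = [] := List.length_eq_zero_iff.1 (Nat.le_zero.1 hf)
    cases g <;> simp [dtShapeAux]
  | succ f ih =>
    intro g w hf hg
    cases g with
    | zero =>
      obtain rfl : w = [] := List.length_eq_zero_iff.1 (Nat.le_zero.1 hg)
      simp [dtShapeAux]
    | succ g =>
      by_cases hw : w = []
      · subst hw; simp [dtShapeAux]
      · have hiw : w.idxOf (w.foldr max 0) < w.length :=
          List.idxOf_lt_length_iff.2 (foldr_max_mem hw)
        simp only [dtShapeAux, if_neg hw]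
        congr 1
        · exact ih _ _ (by simp; omega) (by simp; omega)
        · exact ih _ _ (by simp; omega) (by simp; omega)

lemma dtShapeAux_eq_dtShape {f : ℕ} {w : List ℕ} (h : w.length ≤ f) :
    dtShapeAux f w = dtShape w :=
  dtShapeAux_congr f w.length w h le_rfl

lemma nodes_dtShapeAux : ∀ f (w : List ℕ), w.length ≤ f → (dtShapeAux f w).nodes = w.length := by
  intro f
  induction f with
  | zero =>
    intro w hf
    obtain rfl : w = [] := List.length_eq_zero_iff.1 (Nat.le_zero.1 hf)
    simp [dtShapeAux, BT.nodes]
  | succ f ih =>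
    intro w hf
    by_cases hw : w = []
    · subst hw; simp [dtShapeAux, BT.nodes]
    · have hiw : w.idxOf (w.foldr max 0) < w.length :=
        List.idxOf_lt_length_iff.2 (foldr_max_mem hw)
      simp only [dtShapeAux, if_neg hw, BT.nodes]
      rw [ih _ (by simp; omega), ih _ (by simp; omega)]
      simp only [List.length_take, List.length_drop]
      omega

lemma nodes_dtShape (w : List ℕ) : (dtShape w).nodes = w.length :=
  nodes_dtShapeAux _ _ le_rfl

lemma dtShape_append {u v : List ℕ} {M : ℕ} (hu : ∀ x ∈ u, x < M) (hv : ∀ x ∈ v, x ≤ M) :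
    dtShape (u ++ M :: v) = BT.nd (dtShape u) (dtShape v) := by
  have hMw : M ∈ u ++ M :: v := by simp
  have hub : ∀ x ∈ u ++ M :: v, x ≤ M := by
    intro x hx
    rcases List.mem_append.1 hx with h | h
    · exact le_of_lt (hu x h)
    · rcases List.mem_cons.1 h with rfl | h
      · exact le_rfl
      · exact hv x h
  have hfold : (u ++ M :: v).foldr max 0 = M := foldr_max_eq hMw hub
  have hMnu : M ∉ u := fun h => lt_irrefl M (hu M h)
  have hidx : (u ++ M :: v).idxOf M = u.length := by
    rw [List.idxOf_append_of_notMem hMnu, List.idxOf_cons_self]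
    omega
  have hlen : (u ++ M :: v).length = u.length + v.length + 1 := by
    simp only [List.length_append, List.length_cons]
    omega
  have htake : (u ++ M :: v).take u.length = u := List.take_left' rfl
  have hdrop : (u ++ M :: v).drop (u.length + 1) = v := by
    have h1 : u ++ M :: v = (u ++ [M]) ++ v := by simp
    rw [h1]
    exact List.drop_left' (by simp)
  rw [dtShape, hlen]
  simp only [dtShapeAux, if_neg (by simp : u ++ M :: v ≠ []), hfold, hidx, htake, hdrop]
  rw [dtShapeAux_eq_dtShape (by omega), dtShapeAux_eq_dtShape (by omega)]

lemma dtShape_decomp {w : List ℕ} {l r : BT} (h : dtShape w = BT.nd l r) :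
    ∃ u M v, w = u ++ M :: v ∧ u.length = l.nodes ∧ dtShape u = l ∧ dtShape v = r ∧
      M ∈ w ∧ ∀ x ∈ w, x ≤ M := by
  have hne : w ≠ [] := by
    rintro rfl
    simp [dtShape, dtShapeAux] at h
  have hMem : w.foldr max 0 ∈ w := foldr_max_mem hne
  have hub : ∀ x ∈ w, x ≤ w.foldr max 0 := fun x hx => le_foldr_max hx
  have hilt : w.idxOf (w.foldr max 0) < w.length := List.idxOf_lt_length_iff.2 hMem
  obtain ⟨L, hL⟩ : ∃ L, w.length = L + 1 := by
    cases w with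
    | nil => exact absurd rfl hne
    | cons a t => exact ⟨t.length, rfl⟩
  rw [dtShape, hL] at h
  simp only [dtShapeAux, if_neg hne] at h
  rw [dtShapeAux_eq_dtShape (by simp; omega), dtShapeAux_eq_dtShape (by simp; omega)] at h
  injection h with h1 h2
  refine ⟨w.take (w.idxOf (w.foldr max 0)), w.foldr max 0, w.drop (w.idxOf (w.foldr max 0) + 1),
    ?_, ?_, h1, h2, hMem, hub⟩
  · conv_lhs => rw [← List.take_append_drop (w.idxOf (w.foldr max 0)) w]
    rw [← List.getElem_cons_drop hilt, List.getElem_idxOf hilt]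
  · rw [← h1, nodes_dtShape, List.length_take]

lemma countA : ∀ t : BT, ∀ S : Finset ℕ, S.card = t.nodes + 1 →
    ((wordsOf S).filter (fun w => admB t w = true)).card = Fcnt t := by
  intro t
  induction t with
  | nil =>
    intro S hS
    have h1 : S.card = 1 := by simpa [BT.nodes] using hS
    rw [Finset.filter_true_of_mem (fun w _ => by simp [admB]), card_wordsOf, h1]
    rfl
  | nd l r ihl ihr =>
    intro S hS
    have hnodes : S.card = l.nodes + r.nodes + 2 := by simp [BT.nodes] at hS; omega
    have hSne : S.Nonempty := Finset.card_pos.1 (by omega)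
    set m := S.min' hSne with hmdef
    set M := S.max' hSne with hMdef
    have hmS : m ∈ S := S.min'_mem hSne
    have hMS : M ∈ S := S.max'_mem hSne
    have hmM : m < M := S.min'_lt_max'_of_card (by omega)
    have hmin_le : ∀ x ∈ S, m ≤ x := fun x hx => S.min'_le x hx
    have hle_max : ∀ x ∈ S, x ≤ M := fun x hx => S.le_max' x hx
    have hE : ((S.erase M).erase m).card = l.nodes + r.nodes := by
      rw [Finset.card_erase_of_mem (Finset.mem_erase.2 ⟨ne_of_lt hmM, hmS⟩),
        Finset.card_erase_of_mem hMS]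
      omega
    have hLfacts : ∀ L ∈ ((S.erase M).erase m).powersetCard l.nodes,
        m ∉ L ∧ M ∉ L ∧ insert m L ⊆ S ∧ (insert m L).card = l.nodes + 1 ∧
          (S \ insert m L).card = r.nodes + 1 ∧ M ∈ S \ insert m L := by
      intro L hL
      rw [Finset.mem_powersetCard] at hL
      obtain ⟨hsub, hcard⟩ := hL
      have hmL : m ∉ L := fun h => (Finset.mem_erase.1 (hsub h)).1 rfl
      have hML : M ∉ L := fun h => (Finset.mem_erase.1 (Finset.mem_of_mem_erase (hsub h))).1 rfl
      have hLS : ∀ x ∈ L, x ∈ S := fun x hx =>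
        Finset.mem_of_mem_erase (Finset.mem_of_mem_erase (hsub hx))
      have hsubS : insert m L ⊆ S := by
        intro x hx
        rcases Finset.mem_insert.1 hx with rfl | hx
        · exact hmS
        · exact hLS x hx
      have hcardins : (insert m L).card = l.nodes + 1 := by
        rw [Finset.card_insert_of_notMem hmL, hcard]
      refine ⟨hmL, hML, hsubS, hcardins, ?_, ?_⟩
      · rw [Finset.card_sdiff_of_subset hsubS, hnodes, hcardins]; omega
      · refine Finset.mem_sdiff.2 ⟨hMS, fun h => ?_⟩
        rcases Finset.mem_insert.1 h with h | h
        · exact absurd h.symm (ne_of_lt hmM)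
        · exact hML h
    set D := (((S.erase M).erase m).powersetCard l.nodes).sigma (fun L =>
        ((wordsOf (insert m L)).filter (fun w => admB l w = true)) ×ˢ
        ((wordsOf (S \ insert m L)).filter (fun w => admB r w = true))) with hD
    have hcardD : D.card = Fcnt (BT.nd l r) := by
      rw [hD, Finset.card_sigma]
      have heach : ∀ L ∈ ((S.erase M).erase m).powersetCard l.nodes,
          (((wordsOf (insert m L)).filter (fun w => admB l w = true)) ×ˢ
            ((wordsOf (S \ insert m L)).filter (fun w => admB r w = true))).card
          = Fcnt l * Fcnt r := by
        intro L hL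
        obtain ⟨_, _, _, h4, h5, _⟩ := hLfacts L hL
        rw [Finset.card_product, ihl _ h4, ihr _ h5]
      rw [Finset.sum_congr rfl heach, Finset.sum_const, Finset.card_powersetCard, hE]
      simp [Fcnt, mul_assoc]
    rw [← hcardD]
    refine Finset.card_bij' (fun w _ => (⟨(w.take (l.nodes + 1)).toFinset.erase m,
        (w.take (l.nodes + 1), w.drop (l.nodes + 1))⟩ : Σ _ : Finset ℕ, List ℕ × List ℕ))
      (fun p _ => p.2.1 ++ p.2.2) ?_ ?_ ?_ ?_
    · -- forward map lands in D
      intro w hw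
      rw [Finset.mem_filter] at hw
      obtain ⟨hwS, hadm⟩ := hw
      simp only [admB, Bool.and_eq_true, decide_eq_true_eq] at hadm
      obtain ⟨⟨⟨hal, har⟩, hmin⟩, hmax⟩ := hadm
      have hwlen : w.length = l.nodes + r.nodes + 2 := by
        rw [length_of_mem_wordsOf hwS, hnodes]
      have hwnd : w.Nodup := nodup_of_mem_wordsOf hwS
      have hulen : (w.take (l.nodes + 1)).length = l.nodes + 1 := by
        rw [List.length_take]; omega
      have huv : w.take (l.nodes + 1) ++ w.drop (l.nodes + 1) = w := List.take_append_drop _ _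
      have hund : (w.take (l.nodes + 1)).Nodup := (List.take_sublist _ _).nodup hwnd
      have hvnd : (w.drop (l.nodes + 1)).Nodup := (List.drop_sublist _ _).nodup hwnd
      have hdisj : (w.take (l.nodes + 1)).Disjoint (w.drop (l.nodes + 1)) := by
        have h := hwnd
        rw [← huv, List.nodup_append'] at h
        exact h.2.2
      have hminw : w.minimum = (m : WithTop ℕ) :=
        List.minimum_eq_coe_iff.2 ⟨(mem_iff_of_mem_wordsOf hwS).2 hmS,
          fun b hb => hmin_le b ((mem_iff_of_mem_wordsOf hwS).1 hb)⟩
      have hmaxw : w.maximum = (M : WithBot ℕ) :=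
        List.maximum_eq_coe_iff.2 ⟨(mem_iff_of_mem_wordsOf hwS).2 hMS,
          fun b hb => hle_max b ((mem_iff_of_mem_wordsOf hwS).1 hb)⟩
      have hmu : m ∈ w.take (l.nodes + 1) := by
        rw [hminw] at hmin
        exact (List.minimum_eq_coe_iff.1 hmin).1
      have hMv : M ∈ w.drop (l.nodes + 1) := by
        rw [hmaxw] at hmax
        exact (List.maximum_eq_coe_iff.1 hmax).1
      have hmemu : ∀ x ∈ w.take (l.nodes + 1), x ∈ S := fun x hx =>
        (mem_iff_of_mem_wordsOf hwS).1 ((List.take_sublist _ _).subset hx)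
      have hMnu : M ∉ w.take (l.nodes + 1) := fun h => hdisj h hMv
      rw [hD, Finset.mem_sigma]
      constructor
      · rw [Finset.mem_powersetCard]
        constructor
        · intro x hx
          rw [Finset.mem_erase, List.mem_toFinset] at hx
          obtain ⟨hxm, hxu⟩ := hx
          exact Finset.mem_erase.2 ⟨hxm,
            Finset.mem_erase.2 ⟨fun h => hMnu (h ▸ hxu), hmemu x hxu⟩⟩
        · rw [Finset.card_erase_of_mem (List.mem_toFinset.2 hmu),
            List.toFinset_card_of_nodup hund, hulen]
          omega
      · rw [Finset.mem_product]
        have hins : insert m ((w.take (l.nodes + 1)).toFinset.erase m)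
            = (w.take (l.nodes + 1)).toFinset :=
          Finset.insert_erase (List.mem_toFinset.2 hmu)
        constructor
        · rw [Finset.mem_filter, hins]
          exact ⟨self_mem_wordsOf hund, hal⟩
        · rw [Finset.mem_filter, hins]
          refine ⟨?_, har⟩
          have hveq : S \ (w.take (l.nodes + 1)).toFinset = (w.drop (l.nodes + 1)).toFinset := by
            ext x
            rw [Finset.mem_sdiff, List.mem_toFinset, List.mem_toFinset]
            constructor
            · rintro ⟨hxS, hxu⟩
              have hxw : x ∈ w := (mem_iff_of_mem_wordsOf hwS).2 hxS
              rw [← huv, List.mem_append] at hxw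
              tauto
            · intro hxv
              exact ⟨(mem_iff_of_mem_wordsOf hwS).1 ((List.drop_sublist _ _).subset hxv),
                fun hxu => hdisj hxu hxv⟩
          rw [hveq]
          exact self_mem_wordsOf hvnd
    · -- backward map lands in the filter
      rintro ⟨L, u, v⟩ hp
      rw [hD, Finset.mem_sigma, Finset.mem_product] at hp
      obtain ⟨hL, hu', hv'⟩ := hp
      rw [Finset.mem_filter] at hu' hv'
      obtain ⟨hu, hal⟩ := hu'
      obtain ⟨hv, har⟩ := hv'
      obtain ⟨hmL, hML, hsubS, hcardins, hcardsdiff, hMsd⟩ := hLfacts L hL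
      have hulen : u.length = l.nodes + 1 := by rw [length_of_mem_wordsOf hu, hcardins]
      have htake : (u ++ v).take (l.nodes + 1) = u := List.take_left' hulen
      have hdrop : (u ++ v).drop (l.nodes + 1) = v := List.drop_left' hulen
      have humem : ∀ x ∈ u, x ∈ S := fun x hx => hsubS ((mem_iff_of_mem_wordsOf hu).1 hx)
      have hvmem : ∀ x ∈ v, x ∈ S := fun x hx =>
        (Finset.mem_sdiff.1 ((mem_iff_of_mem_wordsOf hv).1 hx)).1
      have hmu : m ∈ u := (mem_iff_of_mem_wordsOf hu).2 (Finset.mem_insert_self m L)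
      have hMv : M ∈ v := (mem_iff_of_mem_wordsOf hv).2 hMsd
      have hminu : u.minimum = (m : WithTop ℕ) :=
        List.minimum_eq_coe_iff.2 ⟨hmu, fun b hb => hmin_le b (humem b hb)⟩
      have hminuv : (u ++ v).minimum = (m : WithTop ℕ) := by
        refine List.minimum_eq_coe_iff.2 ⟨List.mem_append.2 (Or.inl hmu), fun b hb => ?_⟩
        rcases List.mem_append.1 hb with h | h
        · exact hmin_le b (humem b h)
        · exact hmin_le b (hvmem b h)
      have hmaxv : v.maximum = (M : WithBot ℕ) :=
        List.maximum_eq_coe_iff.2 ⟨hMv, fun b hb => hle_max b (hvmem b hb)⟩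
      have hmaxuv : (u ++ v).maximum = (M : WithBot ℕ) := by
        refine List.maximum_eq_coe_iff.2 ⟨List.mem_append.2 (Or.inr hMv), fun b hb => ?_⟩
        rcases List.mem_append.1 hb with h | h
        · exact hle_max b (humem b h)
        · exact hle_max b (hvmem b h)
      rw [Finset.mem_filter]
      constructor
      · rw [mem_wordsOf]
        have hco : (↑(u ++ v) : Multiset ℕ) = (insert m L).val + (S \ insert m L).val := by
          rw [← mem_wordsOf.1 hu, ← mem_wordsOf.1 hv]
          simp
        rw [hco, Finset.sdiff_val, add_tsub_cancel_of_le (Finset.val_le_iff.2 hsubS)]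
      · simp only [admB, Bool.and_eq_true, decide_eq_true_eq, htake, hdrop]
        exact ⟨⟨⟨hal, har⟩, by rw [hminu, hminuv]⟩, by rw [hmaxv, hmaxuv]⟩
    · -- left inverse
      intro w _
      exact List.take_append_drop _ _
    · -- right inverse
      rintro ⟨L, u, v⟩ hp
      rw [hD, Finset.mem_sigma, Finset.mem_product] at hp
      obtain ⟨hL, hu', _⟩ := hp
      rw [Finset.mem_filter] at hu'
      obtain ⟨hmL, _, _, hcardins, _, _⟩ := hLfacts L hL
      have hulen : u.length = l.nodes + 1 := by rw [length_of_mem_wordsOf hu'.1, hcardins]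
      have htake : (u ++ v).take (l.nodes + 1) = u := List.take_left' hulen
      have hdrop : (u ++ v).drop (l.nodes + 1) = v := List.drop_left' hulen
      simp only [htake, hdrop, toFinset_of_mem_wordsOf hu'.1, Finset.erase_insert hmL]

lemma countD : ∀ t : BT, ∀ S : Finset ℕ, S.card = t.nodes →
    ((wordsOf S).filter (fun w => dtShape w = t)).card = Fcnt t := by
  intro t
  induction t with
  | nil =>
    intro S hS
    have h0 : S.card = 0 := by simpa [BT.nodes] using hS
    rw [Finset.filter_true_of_mem, card_wordsOf, h0]
    · rfl
    · intro w hw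
      have hlen : w.length = 0 := by rw [length_of_mem_wordsOf hw, h0]
      obtain rfl : w = [] := List.length_eq_zero_iff.1 hlen
      rfl
  | nd l r ihl ihr =>
    intro S hS
    have hnodes : S.card = l.nodes + r.nodes + 1 := by simpa [BT.nodes] using hS
    have hSne : S.Nonempty := Finset.card_pos.1 (by omega)
    set M := S.max' hSne with hMdef
    have hMS : M ∈ S := S.max'_mem hSne
    have hle_max : ∀ x ∈ S, x ≤ M := fun x hx => S.le_max' x hx
    have hE : (S.erase M).card = l.nodes + r.nodes := by
      rw [Finset.card_erase_of_mem hMS]; omega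
    have hLfacts : ∀ L ∈ (S.erase M).powersetCard l.nodes,
        M ∉ L ∧ insert M L ⊆ S ∧ L.card = l.nodes ∧ (S \ insert M L).card = r.nodes ∧
          (∀ x ∈ L, x < M) := by
      intro L hL
      rw [Finset.mem_powersetCard] at hL
      obtain ⟨hsub, hcard⟩ := hL
      have hML : M ∉ L := fun h => (Finset.mem_erase.1 (hsub h)).1 rfl
      have hLS : ∀ x ∈ L, x ∈ S := fun x hx => Finset.mem_of_mem_erase (hsub hx)
      have hsubS : insert M L ⊆ S := by
        intro x hx
        rcases Finset.mem_insert.1 hx with rfl | hx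
        · exact hMS
        · exact hLS x hx
      refine ⟨hML, hsubS, hcard, ?_, ?_⟩
      · rw [Finset.card_sdiff_of_subset hsubS, Finset.card_insert_of_notMem hML, hnodes, hcard]
        omega
      · exact fun x hx => lt_of_le_of_ne (hle_max x (hLS x hx))
          (fun h => (Finset.mem_erase.1 (hsub hx)).1 h)
    set D := ((S.erase M).powersetCard l.nodes).sigma (fun L =>
        ((wordsOf L).filter (fun w => dtShape w = l)) ×ˢ
        ((wordsOf (S \ insert M L)).filter (fun w => dtShape w = r))) with hD
    have hcardD : D.card = Fcnt (BT.nd l r) := by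
      rw [hD, Finset.card_sigma]
      have heach : ∀ L ∈ (S.erase M).powersetCard l.nodes,
          (((wordsOf L).filter (fun w => dtShape w = l)) ×ˢ
            ((wordsOf (S \ insert M L)).filter (fun w => dtShape w = r))).card
          = Fcnt l * Fcnt r := by
        intro L hL
        obtain ⟨_, _, h3, h4, _⟩ := hLfacts L hL
        rw [Finset.card_product, ihl _ h3, ihr _ h4]
      rw [Finset.sum_congr rfl heach, Finset.sum_const, Finset.card_powersetCard, hE]
      simp [Fcnt, mul_assoc]
    -- decomposition of any word in the target set
    have hkey : ∀ w, w ∈ wordsOf S → dtShape w = BT.nd l r →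
        ∃ u v, w = u ++ M :: v ∧ u.length = l.nodes ∧ dtShape u = l ∧ dtShape v = r := by
      intro w hwS hdt
      obtain ⟨u, Mx, v, hw, hulen, hdtu, hdtv, hMxw, hub⟩ := dtShape_decomp hdt
      have hMx : Mx = M := le_antisymm (hle_max _ ((mem_iff_of_mem_wordsOf hwS).1 hMxw))
        (hub M ((mem_iff_of_mem_wordsOf hwS).2 hMS))
      exact ⟨u, v, hMx ▸ hw, hulen, hdtu, hdtv⟩
    rw [← hcardD]
    refine Finset.card_bij' (fun w _ => (⟨(w.take l.nodes).toFinset,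
        (w.take l.nodes, w.drop (l.nodes + 1))⟩ : Σ _ : Finset ℕ, List ℕ × List ℕ))
      (fun p _ => p.2.1 ++ M :: p.2.2) ?_ ?_ ?_ ?_
    · -- forward map lands in D
      intro w hw
      rw [Finset.mem_filter] at hw
      obtain ⟨hwS, hdt⟩ := hw
      obtain ⟨u, v, hw', hulen, hdtu, hdtv⟩ := hkey w hwS hdt
      have htake : w.take l.nodes = u := by rw [hw']; exact List.take_left' hulen
      have hdrop : w.drop (l.nodes + 1) = v := by
        rw [hw', show u ++ M :: v = (u ++ [M]) ++ v by simp]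
        exact List.drop_left' (by simp [hulen])
      have hwnd : w.Nodup := nodup_of_mem_wordsOf hwS
      have hnd := hwnd
      rw [hw', List.nodup_append'] at hnd
      obtain ⟨hund, hMvnd, hdisj⟩ := hnd
      have hMnu : M ∉ u := fun h => hdisj h List.mem_cons_self
      have hMnv : M ∉ v := (List.nodup_cons.1 hMvnd).1
      have hvnd : v.Nodup := (List.nodup_cons.1 hMvnd).2
      have humem : ∀ x ∈ u, x ∈ S := fun x hx =>
        (mem_iff_of_mem_wordsOf hwS).1 (by rw [hw']; exact List.mem_append.2 (Or.inl hx))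
      have hvmem : ∀ x ∈ v, x ∈ S := fun x hx =>
        (mem_iff_of_mem_wordsOf hwS).1
          (by rw [hw']; exact List.mem_append.2 (Or.inr (List.mem_cons_of_mem _ hx)))
      rw [hD, Finset.mem_sigma]
      dsimp only
      rw [htake, hdrop]
      constructor
      · rw [Finset.mem_powersetCard]
        constructor
        · intro x hx
          rw [List.mem_toFinset] at hx
          exact Finset.mem_erase.2 ⟨fun h => hMnu (h ▸ hx), humem x hx⟩
        · rw [List.toFinset_card_of_nodup hund, hulen]
      · rw [Finset.mem_product]
        constructor
        · rw [Finset.mem_filter]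
          exact ⟨self_mem_wordsOf hund, hdtu⟩
        · rw [Finset.mem_filter]
          refine ⟨?_, hdtv⟩
          have hveq : S \ insert M (u.toFinset) = v.toFinset := by
            ext x
            rw [Finset.mem_sdiff, Finset.mem_insert, List.mem_toFinset, List.mem_toFinset]
            constructor
            · rintro ⟨hxS, hxn⟩
              have hxw : x ∈ w := (mem_iff_of_mem_wordsOf hwS).2 hxS
              rw [hw', List.mem_append, List.mem_cons] at hxw
              tauto
            · intro hxv
              refine ⟨hvmem x hxv, ?_⟩
              rintro (rfl | hxu)
              · exact hMnv hxv
              · exact hdisj hxu (List.mem_cons_of_mem _ hxv)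
          rw [hveq]
          exact self_mem_wordsOf hvnd
    · -- backward map lands in the filter
      rintro ⟨L, u, v⟩ hp
      rw [hD, Finset.mem_sigma, Finset.mem_product] at hp
      obtain ⟨hL, hu', hv'⟩ := hp
      rw [Finset.mem_filter] at hu' hv'
      obtain ⟨hu, hdtu⟩ := hu'
      obtain ⟨hv, hdtv⟩ := hv'
      obtain ⟨hML, hsubS, hcardL, hcardsd, hltM⟩ := hLfacts L hL
      have huL : ∀ x ∈ u, x < M := fun x hx => hltM x ((mem_iff_of_mem_wordsOf hu).1 hx)
      have hvle : ∀ x ∈ v, x ≤ M := fun x hx =>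
        hle_max x (Finset.mem_sdiff.1 ((mem_iff_of_mem_wordsOf hv).1 hx)).1
      rw [Finset.mem_filter]
      constructor
      · rw [mem_wordsOf]
        have hins : (insert M L).val = M ::ₘ L.val := Finset.insert_val_of_notMem hML
        have hle : (insert M L).val ≤ S.val := Finset.val_le_iff.2 hsubS
        have hco : (↑(u ++ M :: v) : Multiset ℕ) = L.val + (M ::ₘ (S \ insert M L).val) := by
          rw [← mem_wordsOf.1 hu, ← mem_wordsOf.1 hv]
          simp
        rw [hco, Finset.sdiff_val, hins]
        rw [← Multiset.singleton_add, ← Multiset.singleton_add, ← add_assoc,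
          add_comm L.val {M}]
        exact add_tsub_cancel_of_le (by rwa [Multiset.singleton_add, ← hins])
      · rw [dtShape_append huL hvle, hdtu, hdtv]
    · -- left inverse
      intro w hw
      rw [Finset.mem_filter] at hw
      obtain ⟨u, v, hw', hulen, _, _⟩ := hkey w hw.1 hw.2
      have htake : w.take l.nodes = u := by rw [hw']; exact List.take_left' hulen
      have hdrop : w.drop (l.nodes + 1) = v := by
        rw [hw', show u ++ M :: v = (u ++ [M]) ++ v by simp]
        exact List.drop_left' (by simp [hulen])
      dsimp only
      rw [htake, hdrop, hw']
    · -- right inverse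
      rintro ⟨L, u, v⟩ hp
      rw [hD, Finset.mem_sigma, Finset.mem_product] at hp
      obtain ⟨hL, hu', _⟩ := hp
      rw [Finset.mem_filter] at hu'
      obtain ⟨_, _, hcardL, _, _⟩ := hLfacts L hL
      have hulen : u.length = l.nodes := by rw [length_of_mem_wordsOf hu'.1, hcardL]
      have htake : (u ++ M :: v).take l.nodes = u := List.take_left' hulen
      have hdrop : (u ++ M :: v).drop (l.nodes + 1) = v := by
        rw [show u ++ M :: v = (u ++ [M]) ++ v by simp]
        exact List.drop_left' (by simp [hulen])
      simp only [htake, hdrop, toFinset_of_mem_wordsOf hu'.1]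

lemma permWords_eq_wordsOf (n : ℕ) : permWords n = wordsOf (Finset.Icc 1 n) := by
  have hperm : (List.range' 1 n).Perm ((Finset.Icc 1 n).sort (· ≤ ·)) := by
    refine (List.perm_ext_iff_of_nodup (List.nodup_range' (s := 1) (n := n)) (Finset.sort_nodup _ _)).2 ?_
    intro x
    rw [List.mem_range'_1, Finset.mem_sort, Finset.mem_Icc]
    omega
  unfold permWords wordsOf
  exact List.toFinset_eq_of_perm _ _ hperm.permutations

theorem stmt14 : ∀ t : BT, ∀ n : ℕ, t.nodes + 1 = n → 2 ≤ n →
    ((permWords n).filter (fun w => admB t w = true)).card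
      = ((permWords (n - 1)).filter (fun w => dtShape w = t)).card := by
  intro t n h1 h2
  rw [permWords_eq_wordsOf, permWords_eq_wordsOf,
    countA t _ (by rw [Nat.card_Icc]; omega),
    countD t _ (by rw [Nat.card_Icc]; omega)]
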